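/- arXiv:2401.10497 — 5 statements merged into one kernel-verified Lean document; each statement's English description precedes it below -/
import Mathlib

section
/- For every positive integer x, ∑_{m ≤ x} log(rad m) = x log x + O(x), where rad m denotes the radical (product of distinct prime divisors) of m. -/
def rad (n : ℕ) : ℕ := ∏ p ∈ n.primeFactors, p

open Finset ArithmeticFunction Real

/-- the non-prime part of von Mangoldt -/
noncomputable def gfun (d : ℕ) : ℝ := if d.Prime then 0 else Λ d

lemma gfun_nonneg (d : ℕ) : 0 ≤ gfun d := by
  unfold gfun; split <;> simp [vonMangoldt_nonneg]

/-- per-m identity -/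
lemma lemA {m : ℕ} (hm : 1 ≤ m) :
    Real.log m - Real.log (rad m) = ∑ d ∈ m.divisors, gfun d := by
  have h1 : Real.log (rad m) = ∑ d ∈ m.divisors.filter Nat.Prime, Λ d := by
    rw [show m.divisors.filter Nat.Prime = m.primeFactors from
      (Nat.primeFactors_eq_to_filter_divisors_prime m).symm]
    unfold rad
    push_cast
    rw [Real.log_prod]
    · exact Finset.sum_congr rfl fun p hp => (vonMangoldt_apply_prime (Nat.prime_of_mem_primeFactors hp)).symm
    · intro p hp
      exact_mod_cast (Nat.prime_of_mem_primeFactors hp).pos.ne'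
  have h2 : Real.log m = ∑ d ∈ m.divisors, Λ d := vonMangoldt_sum.symm
  rw [h1, h2, Finset.sum_filter]
  rw [← Finset.sum_sub_distrib]
  refine Finset.sum_congr rfl fun d _ => ?_
  unfold gfun
  split <;> simp

/-- swap lemma -/
lemma lemB (x : ℕ) :
    ∑ m ∈ Finset.Icc 1 x, ∑ d ∈ m.divisors, gfun d
      = ∑ d ∈ Finset.Icc 1 x, gfun d * ((x / d : ℕ) : ℝ) := by
  have hdiv : ∀ m ∈ Finset.Icc 1 x, m.divisors = (Finset.Icc 1 x).filter (· ∣ m) := by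
    intro m hm
    rw [Finset.mem_Icc] at hm
    ext d
    simp only [Nat.mem_divisors, Finset.mem_filter, Finset.mem_Icc]
    constructor
    · rintro ⟨hd, hm0⟩
      exact ⟨⟨Nat.pos_of_dvd_of_pos hd (by omega), le_trans (Nat.le_of_dvd (by omega) hd) hm.2⟩, hd⟩
    · rintro ⟨-, hd⟩
      exact ⟨hd, by omega⟩
  calc ∑ m ∈ Finset.Icc 1 x, ∑ d ∈ m.divisors, gfun d
      = ∑ m ∈ Finset.Icc 1 x, ∑ d ∈ Finset.Icc 1 x, if d ∣ m then gfun d else 0 := by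
        refine Finset.sum_congr rfl fun m hm => ?_
        rw [hdiv m hm, Finset.sum_filter]
    _ = ∑ d ∈ Finset.Icc 1 x, ∑ m ∈ Finset.Icc 1 x, if d ∣ m then gfun d else 0 :=
        Finset.sum_comm
    _ = ∑ d ∈ Finset.Icc 1 x, gfun d * ((x / d : ℕ) : ℝ) := by
        refine Finset.sum_congr rfl fun d _ => ?_
        rw [← Finset.sum_filter, Finset.sum_const]
        rw [show Finset.Icc 1 x = Finset.Ioc 0 x from rfl]
        rw [Nat.Ioc_filter_dvd_card_eq_div]
        rw [nsmul_eq_mul, mul_comm]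

noncomputable def C1 : ℝ := ∑' n : ℕ, 2 * (n : ℝ) ^ (-(3/2) : ℝ)

lemma summable_a : Summable (fun n : ℕ => 2 * (n : ℝ) ^ (-(3/2) : ℝ)) :=
  (Real.summable_nat_rpow.mpr (by norm_num)).mul_left 2

lemma C1_nonneg : 0 ≤ C1 :=
  tsum_nonneg fun n => by positivity

lemma struct {d : ℕ} (hd : gfun d ≠ 0) : ∃ p k, Nat.Prime p ∧ 2 ≤ k ∧ p ^ k = d := by
  have hnp : ¬ d.Prime := by intro h; simp [gfun, h] at hd
  have hΛ : Λ d ≠ 0 := by simpa [gfun, hnp] using hd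
  obtain ⟨p, k, hp, hk, rfl⟩ := (isPrimePow_nat_iff d).mp (vonMangoldt_ne_zero_iff.mp hΛ)
  refine ⟨p, k, hp, ?_, rfl⟩
  rcases k with _ | _ | k
  · omega
  · rw [pow_one] at hnp; exact absurd hp hnp
  · omega

lemma ieval {p k : ℕ} (hp : Nat.Prime p) (hk : 2 ≤ k) :
    (p ^ k).minFac = p ∧ (p ^ k).factorization ((p ^ k).minFac) = k ∧
      gfun (p ^ k) / ((p ^ k : ℕ) : ℝ) = Real.log p * (1 / (p : ℝ)) ^ k := by
  have hmf : (p ^ k).minFac = p := hp.pow_minFac (by omega)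
  refine ⟨hmf, ?_, ?_⟩
  · rw [hmf, hp.factorization_pow, Finsupp.single_eq_same]
  · have hnp : ¬ (p ^ k).Prime := Nat.Prime.not_prime_pow hk
    have hg : gfun (p ^ k) = Real.log p := by
      rw [gfun, if_neg hnp, vonMangoldt_apply_pow (by omega : k ≠ 0),
        vonMangoldt_apply_prime hp]
    rw [hg, Nat.cast_pow, div_eq_mul_inv, ← inv_pow, one_div]

lemma termwise {p k : ℕ} (hp : 2 ≤ p) (hk : 2 ≤ k) :
    Real.log p * (1 / (p : ℝ)) ^ k ≤ (2 * (p : ℝ) ^ (-(3/2) : ℝ)) * (4 * (1/2 : ℝ) ^ k) := by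
  have hp0 : (0 : ℝ) < p := by exact_mod_cast (by omega : 0 < p)
  have hp2 : (2 : ℝ) ≤ p := by exact_mod_cast hp
  have hlog : Real.log p ≤ 2 * (p : ℝ) ^ ((1 : ℝ)/2) := by
    have h := Real.log_le_rpow_div (Nat.cast_nonneg p) (by norm_num : (0 : ℝ) < 1/2)
    have h2 : (p : ℝ) ^ ((1:ℝ)/2) / (1/2) = 2 * (p : ℝ) ^ ((1:ℝ)/2) := by ring
    linarith [h, h2.le]
  have hpow : ((1 : ℝ)/p) ^ k ≤ (p : ℝ) ^ (-(2 : ℝ)) * (4 * (1/2 : ℝ) ^ k) := by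
    have e1 : ((1 : ℝ)/p) ^ k = (1/(p:ℝ)) ^ 2 * (1/(p:ℝ)) ^ (k - 2) := by
      rw [← pow_add]; congr 1; omega
    have e2 : (1/(p:ℝ)) ^ (k - 2) ≤ (1/2 : ℝ) ^ (k - 2) :=
      pow_le_pow_left₀ (by positivity) (one_div_le_one_div_of_le (by norm_num) hp2) _
    have e3 : ((1 : ℝ)/2) ^ (k - 2) = 4 * (1/2 : ℝ) ^ k := by
      have : ((1 : ℝ)/2) ^ k = (1/2 : ℝ) ^ (k - 2) * (1/2 : ℝ) ^ 2 := by
        rw [← pow_add]; congr 1; omega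
      rw [this]; ring
    have e4 : (1/(p:ℝ)) ^ 2 = (p : ℝ) ^ (-(2 : ℝ)) := by
      rw [one_div, inv_pow, ← Real.rpow_natCast (p : ℝ) 2, ← Real.rpow_neg hp0.le]
      norm_num
    calc ((1 : ℝ)/p) ^ k = (1/(p:ℝ)) ^ 2 * (1/(p:ℝ)) ^ (k - 2) := e1
      _ ≤ (1/(p:ℝ)) ^ 2 * (1/2 : ℝ) ^ (k - 2) :=
          mul_le_mul_of_nonneg_left e2 (by positivity)
      _ = (p : ℝ) ^ (-(2 : ℝ)) * (4 * (1/2 : ℝ) ^ k) := by rw [e4, e3]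
  calc Real.log p * (1 / (p : ℝ)) ^ k
      ≤ (2 * (p : ℝ) ^ ((1 : ℝ)/2)) * ((p : ℝ) ^ (-(2 : ℝ)) * (4 * (1/2 : ℝ) ^ k)) := by
        apply mul_le_mul hlog hpow (by positivity) (by positivity)
    _ = (2 * (p : ℝ) ^ (-(3/2) : ℝ)) * (4 * (1/2 : ℝ) ^ k) := by
        rw [show (-(3/2) : ℝ) = (1:ℝ)/2 + -2 by norm_num, Real.rpow_add hp0]; ring

noncomputable def ifun (d : ℕ) : ℕ × ℕ := (d.minFac, d.factorization d.minFac)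

noncomputable def F (q : ℕ × ℕ) : ℝ := Real.log q.1 * (1 / (q.1 : ℝ)) ^ q.2

lemma lemC (x : ℕ) : ∑ d ∈ Finset.Icc 1 x, gfun d / d ≤ 8 * C1 := by
  set S' := (Finset.Icc 1 x).filter (fun d => gfun d ≠ 0) with hS'
  have step1 : ∑ d ∈ Finset.Icc 1 x, gfun d / d = ∑ d ∈ S', gfun d / d := by
    refine (Finset.sum_subset (Finset.filter_subset _ _) fun d hd hnd => ?_).symm
    have : gfun d = 0 := by
      by_contra h
      exact hnd (Finset.mem_filter.mpr ⟨hd, h⟩)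
    rw [this, zero_div]
  have key : ∀ d ∈ S', ∃ p k, Nat.Prime p ∧ 2 ≤ k ∧ p ^ k = d ∧ ifun d = (p, k) ∧
      gfun d / d = F (p, k) := by
    intro d hd
    obtain ⟨p, k, hp, hk, rfl⟩ := struct (Finset.mem_filter.mp hd).2
    obtain ⟨h1, h2, h3⟩ := ieval hp hk
    refine ⟨p, k, hp, hk, rfl, ?_, by rw [F]; exact_mod_cast h3⟩
    rw [ifun]
    rw [h1] at h2 ⊢
    rw [h2]
  have hinj : ∀ d₁ ∈ S', ∀ d₂ ∈ S', ifun d₁ = ifun d₂ → d₁ = d₂ := by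
    intro d₁ h₁ d₂ h₂ he
    obtain ⟨p₁, k₁, _, _, hd₁, hi₁, -⟩ := key d₁ h₁
    obtain ⟨p₂, k₂, _, _, hd₂, hi₂, -⟩ := key d₂ h₂
    rw [hi₁, hi₂] at he
    obtain ⟨rfl, rfl⟩ := Prod.mk.injEq .. ▸ he
    rw [← hd₁, ← hd₂]
  have step2 : ∑ d ∈ S', gfun d / d = ∑ q ∈ S'.image ifun, F q := by
    rw [Finset.sum_image hinj]
    refine Finset.sum_congr rfl fun d hd => ?_
    obtain ⟨p, k, _, _, _, hi, hF⟩ := key d hd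
    rw [hi, hF]
  have hsub : S'.image ifun ⊆ Finset.Icc 2 x ×ˢ Finset.Icc 2 x := by
    intro q hq
    obtain ⟨d, hd, rfl⟩ := Finset.mem_image.mp hq
    obtain ⟨p, k, hp, hk, hdpk, hi, -⟩ := key d hd
    have hdx : d ≤ x := (Finset.mem_Icc.mp (Finset.mem_filter.mp hd).1).2
    rw [hi, Finset.mem_product, Finset.mem_Icc, Finset.mem_Icc]
    have hpd : p ≤ d := by
      rw [← hdpk]; exact Nat.le_self_pow (by omega) p
    have hkd : k ≤ d := by
      have h1 : k < 2 ^ k := Nat.lt_two_pow_self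
      have h2 : 2 ^ k ≤ p ^ k := Nat.pow_le_pow_left hp.two_le k
      omega
    exact ⟨⟨hp.two_le, le_trans hpd hdx⟩, ⟨hk, le_trans hkd hdx⟩⟩
  have step4 : ∑ q ∈ S'.image ifun, F q ≤
      ∑ q ∈ Finset.Icc 2 x ×ˢ Finset.Icc 2 x, F q := by
    refine Finset.sum_le_sum_of_subset_of_nonneg hsub fun q hq _ => ?_
    rw [Finset.mem_product, Finset.mem_Icc] at hq
    have : (1 : ℝ) ≤ q.1 := by exact_mod_cast le_trans one_le_two hq.1.1
    unfold F
    have := Real.log_nonneg this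
    positivity
  have step5 : ∑ q ∈ Finset.Icc 2 x ×ˢ Finset.Icc 2 x, F q ≤
      (∑ p ∈ Finset.Icc 2 x, 2 * (p : ℝ) ^ (-(3/2) : ℝ)) *
        (∑ k ∈ Finset.Icc 2 x, 4 * (1/2 : ℝ) ^ k) := by
    rw [Finset.sum_mul_sum, ← Finset.sum_product']
    refine Finset.sum_le_sum fun q hq => ?_
    rw [Finset.mem_product, Finset.mem_Icc, Finset.mem_Icc] at hq
    exact termwise hq.1.1 hq.2.1
  have step7 : ∑ p ∈ Finset.Icc 2 x, 2 * (p : ℝ) ^ (-(3/2) : ℝ) ≤ C1 :=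
    Summable.sum_le_tsum _ (fun n _ => by positivity) summable_a
  have step8 : ∑ k ∈ Finset.Icc 2 x, 4 * (1/2 : ℝ) ^ k ≤ 8 := by
    have h1 : ∑ k ∈ Finset.Icc 2 x, 4 * (1/2 : ℝ) ^ k ≤
        ∑ k ∈ Finset.range (x + 1), 4 * (1/2 : ℝ) ^ k := by
      refine Finset.sum_le_sum_of_subset_of_nonneg ?_ fun k _ _ => by positivity
      intro k hk
      rw [Finset.mem_Icc] at hk
      rw [Finset.mem_range]
      omega
    have h2 : ∑ k ∈ Finset.range (x + 1), 4 * (1/2 : ℝ) ^ k ≤ 8 := by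
      rw [← Finset.mul_sum]
      have := sum_geometric_two_le (x + 1)
      linarith
    linarith
  have hnn1 : (0 : ℝ) ≤ ∑ p ∈ Finset.Icc 2 x, 2 * (p : ℝ) ^ (-(3/2) : ℝ) :=
    Finset.sum_nonneg fun n _ => by positivity
  have hnn2 : (0 : ℝ) ≤ ∑ k ∈ Finset.Icc 2 x, 4 * (1/2 : ℝ) ^ k :=
    Finset.sum_nonneg fun n _ => by positivity
  calc ∑ d ∈ Finset.Icc 1 x, gfun d / d = ∑ q ∈ S'.image ifun, F q := by rw [step1, step2]
    _ ≤ ∑ q ∈ Finset.Icc 2 x ×ˢ Finset.Icc 2 x, F q := step4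
    _ ≤ _ := step5
    _ ≤ C1 * 8 := mul_le_mul step7 step8 hnn2 C1_nonneg
    _ = 8 * C1 := by ring

lemma lemD (x : ℕ) : (x : ℝ) * Real.log x - x ≤ ∑ m ∈ Finset.Icc 1 x, Real.log m := by
  rcases Nat.eq_zero_or_pos x with rfl | hx
  · simp
  have hf : (0 : ℝ) < ((x.factorial : ℕ) : ℝ) := by exact_mod_cast x.factorial_pos
  have hfac : ∑ m ∈ Finset.Icc 1 x, Real.log m = Real.log ((x.factorial : ℕ) : ℝ) := by
    rw [← Real.log_prod (fun m hm => by
      have : 1 ≤ m := (Finset.mem_Icc.mp hm).1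
      exact_mod_cast (by omega : m ≠ 0))]
    congr 1
    rw [← Nat.cast_prod]
    congr 1
    rw [← Finset.Ico_add_one_right_eq_Icc, Finset.prod_Ico_id_eq_factorial]
  have hpow : (x : ℝ) ^ x ≤ Real.exp x * ((x.factorial : ℕ) : ℝ) := by
    have h := Real.pow_div_factorial_le_exp (x := (x : ℝ)) (Nat.cast_nonneg x) x
    calc (x : ℝ) ^ x = ((x : ℝ) ^ x / (x.factorial : ℕ)) * (x.factorial : ℕ) := by field_simp
      _ ≤ Real.exp x * (x.factorial : ℕ) := by
          exact mul_le_mul_of_nonneg_right (by exact_mod_cast h) hf.le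
  have hx0 : (0 : ℝ) < (x : ℝ) ^ x := by
    have : (0 : ℝ) < (x : ℝ) := by exact_mod_cast hx
    positivity
  have h1 : (x : ℝ) * Real.log x ≤ (x : ℝ) + Real.log ((x.factorial : ℕ) : ℝ) := by
    calc (x : ℝ) * Real.log x = Real.log ((x : ℝ) ^ x) := by rw [Real.log_pow]
      _ ≤ Real.log (Real.exp x * ((x.factorial : ℕ) : ℝ)) := Real.log_le_log hx0 hpow
      _ = (x : ℝ) + Real.log ((x.factorial : ℕ) : ℝ) := by
          rw [Real.log_mul (Real.exp_ne_zero _) hf.ne', Real.log_exp]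
  rw [hfac]
  linarith


theorem stmt_7 : ∃ C : ℝ, 0 < C ∧ ∀ x : ℕ, 1 ≤ x →
    |(∑ m ∈ Finset.Icc 1 x, Real.log (rad m)) - x * Real.log x| ≤ C * x := by
  refine ⟨8 * C1 + 1, by linarith [C1_nonneg], fun x hx => ?_⟩
  have hX1 : (1 : ℝ) ≤ (x : ℝ) := by exact_mod_cast hx
  set L := ∑ m ∈ Finset.Icc 1 x, Real.log m with hL
  set S := ∑ m ∈ Finset.Icc 1 x, Real.log (rad m) with hS
  -- upper bound
  have h_upper : S ≤ (x : ℝ) * Real.log x := by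
    have hcard : (Finset.Icc 1 x).card = x := by rw [Nat.card_Icc]; omega
    calc S ≤ ∑ m ∈ Finset.Icc 1 x, Real.log x := by
          refine Finset.sum_le_sum fun m hm => ?_
          rw [Finset.mem_Icc] at hm
          have hm0 : 0 < m := by omega
          have hrdvd : rad m ∣ m := Nat.prod_primeFactors_dvd m
          have hr0 : 0 < rad m := Nat.pos_of_dvd_of_pos hrdvd hm0
          have hrx : rad m ≤ x := le_trans (Nat.le_of_dvd hm0 hrdvd) hm.2
          exact Real.log_le_log (by exact_mod_cast hr0) (by exact_mod_cast hrx)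
      _ = (x : ℝ) * Real.log x := by
          rw [Finset.sum_const, hcard, nsmul_eq_mul]
  -- the error term
  have h_LS : L - S = ∑ d ∈ Finset.Icc 1 x, gfun d * ((x / d : ℕ) : ℝ) := by
    rw [hL, hS, ← Finset.sum_sub_distrib, ← lemB x]
    exact Finset.sum_congr rfl fun m hm => lemA (Finset.mem_Icc.mp hm).1
  have h_E : L - S ≤ (x : ℝ) * (8 * C1) := by
    rw [h_LS]
    calc ∑ d ∈ Finset.Icc 1 x, gfun d * ((x / d : ℕ) : ℝ)
        ≤ ∑ d ∈ Finset.Icc 1 x, gfun d * ((x : ℝ) / d) := by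
          refine Finset.sum_le_sum fun d _ => ?_
          exact mul_le_mul_of_nonneg_left Nat.cast_div_le (gfun_nonneg d)
      _ = (x : ℝ) * ∑ d ∈ Finset.Icc 1 x, gfun d / d := by
          rw [Finset.mul_sum]
          exact Finset.sum_congr rfl fun d _ => by ring
      _ ≤ (x : ℝ) * (8 * C1) := by
          exact mul_le_mul_of_nonneg_left (lemC x) (by linarith)
  have h_lower : (x : ℝ) * Real.log x - (x : ℝ) ≤ L := lemD x
  rw [abs_le]
  constructor
  · nlinarith [C1_nonneg]
  · nlinarith [C1_nonneg, Real.log_nonneg hX1]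
end

section
/- For every positive integer x, x ≤ ∑_{m ≤ x} (log m / log rad m) = O(x); that is, the average of log m / log rad m over m ≤ x is bounded between 1 and an absolute constant. -/
open Finset

def expA (m : ℕ) : ℕ := m.primeFactors.sup m.factorization

lemma basel8 (N : ℕ) : ∑ n ∈ Icc 2 N, (1:ℝ)/(n:ℝ)^2 ≤ 1 := by
  have key : ∀ N : ℕ, 1 ≤ N → ∑ n ∈ Icc 2 N, (1:ℝ)/(n:ℝ)^2 ≤ 1 - 1/N := by
    intro N hN
    induction N with
    | zero => omega
    | succ N ih =>
      rcases Nat.eq_or_lt_of_le hN with h | h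
      · simp [← h]
      · have hN1 : 1 ≤ N := by omega
        rw [Finset.sum_Icc_succ_top (by omega : 2 ≤ N + 1)]
        have hNr : (1:ℝ) ≤ N := by exact_mod_cast hN1
        have : 1/((N:ℝ)+1)^2 ≤ 1/(N:ℝ) - 1/((N:ℝ)+1) := by
          rw [div_sub_div _ _ (by linarith) (by linarith)]
          rw [div_le_div_iff₀ (by positivity) (by positivity)]
          ring_nf
          nlinarith
        have := ih hN1
        push_cast
        linarith
  rcases Nat.lt_or_ge N 2 with h | h
  · interval_cases N <;> simp
  · calc _ ≤ 1 - 1/(N:ℝ) := key N (by omega)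
      _ ≤ 1 := by
        have : (0:ℝ) < N := by positivity
        have : 0 ≤ 1/(N:ℝ) := by positivity
        linarith

lemma geom8 (N : ℕ) : ∑ k ∈ Icc 2 N, (1/2:ℝ)^k ≤ 1/2 := by
  have key : ∀ N : ℕ, 1 ≤ N → ∑ k ∈ Icc 2 N, (1/2:ℝ)^k ≤ 1/2 - (1/2)^N := by
    intro N hN
    induction N with
    | zero => omega
    | succ N ih =>
      rcases Nat.lt_or_ge (N+1) 2 with h | h
      · have hN0 : N = 0 := by omega
        subst hN0; norm_num
      · rw [Finset.sum_Icc_succ_top h, pow_succ]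
        have := ih (by omega)
        nlinarith [pow_pos (by norm_num : (0:ℝ) < 1/2) N]
  rcases Nat.eq_zero_or_pos N with h | h
  · simp [h]
  calc _ ≤ 1/2 - (1/2:ℝ)^N := key N h
    _ ≤ 1/2 := by nlinarith [pow_pos (by norm_num : (0:ℝ) < 1/2) N]

lemma card_dvd_filter8 (x d : ℕ) : ((Icc 1 x).filter (fun m => d ∣ m)).card = x / d := by
  have : Icc 1 x = Ioc 0 x := by rw [← Finset.Icc_add_one_left_eq_Ioc, zero_add]
  rw [this]
  exact Nat.Ioc_filter_dvd_card_eq_div x d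

open scoped Classical in
lemma card_k_bound8 (x k : ℕ) (hk : 2 ≤ k) :
    (((Icc 1 x).filter (fun m => ∃ p, p.Prime ∧ p ^ k ∣ m)).card : ℝ)
      ≤ ∑ n ∈ Icc 2 x, ((x : ℝ) / (n:ℝ)^k) := by
  have hsub : (Icc 1 x).filter (fun m => ∃ p, p.Prime ∧ p ^ k ∣ m)
      ⊆ (Icc 2 x).biUnion (fun n => (Icc 1 x).filter (fun m => n ^ k ∣ m)) := by
    intro m hm
    simp only [mem_filter, mem_Icc] at hm
    obtain ⟨⟨hm1, hmx⟩, p, hp, hpk⟩ := hm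
    have hpkm : p ^ k ≤ m := Nat.le_of_dvd (by omega) hpk
    have hpp : p ≤ p ^ k := Nat.le_self_pow (by omega) p
    simp only [mem_biUnion, mem_filter, mem_Icc]
    exact ⟨p, ⟨hp.two_le, by omega⟩, ⟨by omega, by omega⟩, hpk⟩
  calc (((Icc 1 x).filter (fun m => ∃ p, p.Prime ∧ p ^ k ∣ m)).card : ℝ)
      ≤ (((Icc 2 x).biUnion (fun n => (Icc 1 x).filter (fun m => n ^ k ∣ m))).card : ℝ) := by
        exact_mod_cast Finset.card_le_card hsub
    _ ≤ ∑ n ∈ Icc 2 x, (((Icc 1 x).filter (fun m => n ^ k ∣ m)).card : ℝ) := by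
        exact_mod_cast Finset.card_biUnion_le
    _ ≤ ∑ n ∈ Icc 2 x, ((x : ℝ) / (n:ℝ)^k) := by
        apply Finset.sum_le_sum
        intro n hn
        rw [card_dvd_filter8]
        calc ((x / n ^ k : ℕ) : ℝ) ≤ (x : ℝ) / ((n ^ k : ℕ) : ℝ) := Nat.cast_div_le
          _ = (x : ℝ) / (n:ℝ)^k := by push_cast; ring

lemma sum_div_pow_le8 (x k : ℕ) (hk : 2 ≤ k) :
    ∑ n ∈ Icc 2 x, ((x : ℝ) / (n:ℝ)^k) ≤ 4 * x * (1/2:ℝ)^k := by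
  have step : ∀ n ∈ Icc 2 x, (x : ℝ) / (n:ℝ)^k ≤ 4 * x * (1/2:ℝ)^k * ((1:ℝ)/(n:ℝ)^2) := by
    intro n hn
    have hn2 : 2 ≤ n := (mem_Icc.1 hn).1
    have hnat : 2 ^ (k-2) * n ^ 2 ≤ n ^ k := by
      calc 2 ^ (k-2) * n ^ 2 ≤ n ^ (k-2) * n ^ 2 :=
            Nat.mul_le_mul_right _ (Nat.pow_le_pow_left hn2 _)
        _ = n ^ k := by rw [← pow_add]; congr 1; omega
    have hreal : (2:ℝ) ^ (k-2) * (n:ℝ) ^ 2 ≤ (n:ℝ) ^ k := by exact_mod_cast hnat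
    have h1 : (0:ℝ) < (2:ℝ) ^ (k-2) * (n:ℝ) ^ 2 := by positivity
    have h2 : (0:ℝ) < (n:ℝ) ^ k := by positivity
    calc (x : ℝ) / (n:ℝ)^k ≤ (x:ℝ) / ((2:ℝ) ^ (k-2) * (n:ℝ) ^ 2) := by
          apply div_le_div_of_nonneg_left (by positivity) h1 hreal
      _ = 4 * x * (1/2:ℝ)^k * ((1:ℝ)/(n:ℝ)^2) := by
          have : (2:ℝ) ^ (k-2) = (2:ℝ)^k / 4 := by
            rw [eq_div_iff (by norm_num)]
            calc (2:ℝ)^(k-2) * 4 = 2^(k-2) * 2^2 := by norm_num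
              _ = 2 ^ k := by rw [← pow_add]; congr 1; omega
          rw [this]
          rw [div_pow, one_pow]
          field_simp
  calc ∑ n ∈ Icc 2 x, ((x : ℝ) / (n:ℝ)^k)
      ≤ ∑ n ∈ Icc 2 x, 4 * x * (1/2:ℝ)^k * ((1:ℝ)/(n:ℝ)^2) := Finset.sum_le_sum step
    _ = 4 * x * (1/2:ℝ)^k * ∑ n ∈ Icc 2 x, ((1:ℝ)/(n:ℝ)^2) := by rw [Finset.mul_sum]
    _ ≤ 4 * x * (1/2:ℝ)^k * 1 := by
        apply mul_le_mul_of_nonneg_left (basel8 x) (by positivity)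
    _ = 4 * x * (1/2:ℝ)^k := by ring

lemma two_le_rad8 {m : ℕ} (hm : 2 ≤ m) : 2 ≤ rad m := by
  obtain ⟨p, hp, hpm⟩ := Nat.exists_prime_and_dvd (by omega : m ≠ 1)
  have hpmem : p ∈ m.primeFactors := Nat.mem_primeFactors.2 ⟨hp, hpm, by omega⟩
  have hdvd : p ∣ rad m := Finset.dvd_prod_of_mem _ hpmem
  have hpos : 0 < rad m := Finset.prod_pos (fun q hq => (Nat.prime_of_mem_primeFactors hq).pos)
  calc 2 ≤ p := hp.two_le
    _ ≤ rad m := Nat.le_of_dvd hpos hdvd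

lemma log_le_expA_mul8 {m : ℕ} (hm : 2 ≤ m) :
    Real.log m ≤ (expA m : ℝ) * Real.log (rad m) := by
  have hm0 : m ≠ 0 := by omega
  have hnat : m = ∏ p ∈ m.primeFactors, p ^ (m.factorization p) := by
    conv_lhs => rw [← Nat.factorization_prod_pow_eq_self hm0]
    rw [Finsupp.prod, Nat.support_factorization]
  have hprod : (m : ℝ) = ∏ p ∈ m.primeFactors, (p : ℝ) ^ (m.factorization p) := by
    conv_lhs => rw [hnat]
    push_cast
    rfl
  rw [hprod, Real.log_prod (fun p hp => by
    have := (Nat.prime_of_mem_primeFactors hp).pos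
    positivity)]
  have hlog : Real.log (rad m) = ∑ p ∈ m.primeFactors, Real.log p := by
    rw [rad]; push_cast
    exact Real.log_prod (fun p hp => by
      exact_mod_cast (Nat.prime_of_mem_primeFactors hp).pos.ne')
  rw [hlog, Finset.mul_sum]
  apply Finset.sum_le_sum
  intro p hp
  rw [Real.log_pow]
  have h1 : (m.factorization p : ℝ) ≤ (expA m : ℝ) := by
    exact_mod_cast Finset.le_sup (f := m.factorization) hp
  have h2 : 0 ≤ Real.log p := Real.log_natCast_nonneg p
  nlinarith

open scoped Classical in
lemma term_le8 (x m : ℕ) (hm1 : 1 ≤ m) (hmx : m ≤ x) :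
    (if rad m = 1 then (1 : ℝ) else Real.log m / Real.log (rad m))
      ≤ 1 + (((Icc 2 x).filter (fun k => ∃ p, p.Prime ∧ p ^ k ∣ m)).card : ℝ) := by
  have hcard : (0:ℝ) ≤ (((Icc 2 x).filter (fun k => ∃ p, p.Prime ∧ p ^ k ∣ m)).card : ℝ) :=
    Nat.cast_nonneg _
  rcases Nat.lt_or_ge m 2 with h | h
  · have : m = 1 := by omega
    subst this
    simp [rad]
  · have hrad2 : 2 ≤ rad m := two_le_rad8 h
    have hradne : rad m ≠ 1 := by omega
    rw [if_neg hradne]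
    have hlogpos : 0 < Real.log (rad m) := by
      apply Real.log_pos; exact_mod_cast hrad2
    have h1 : Real.log m / Real.log (rad m) ≤ (expA m : ℝ) := by
      rw [div_le_iff₀ hlogpos]
      exact log_le_expA_mul8 h
    have hA1 : 1 ≤ expA m := by
      obtain ⟨p, hp, hpm⟩ := Nat.exists_prime_and_dvd (by omega : m ≠ 1)
      have hpmem : p ∈ m.primeFactors := Nat.mem_primeFactors.2 ⟨hp, hpm, by omega⟩
      calc 1 ≤ m.factorization p :=
            (Nat.Prime.factorization_pos_of_dvd hp (by omega) hpm)
        _ ≤ expA m := Finset.le_sup hpmem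
    have hAx : expA m ≤ x := by
      apply le_trans _ hmx
      apply Finset.sup_le
      intro p hp
      exact (Nat.factorization_lt p (by omega)).le
    have hsub : Icc 2 (expA m) ⊆ (Icc 2 x).filter (fun k => ∃ p, p.Prime ∧ p ^ k ∣ m) := by
      intro k hk
      rw [mem_Icc] at hk
      rw [mem_filter, mem_Icc]
      refine ⟨⟨hk.1, le_trans hk.2 hAx⟩, ?_⟩
      have : ∃ p ∈ m.primeFactors, k ≤ m.factorization p := by
        rw [← Finset.le_sup_iff (show (⊥ : ℕ) < k by simp only [Nat.bot_eq_zero]; omega)]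
        exact hk.2
      obtain ⟨p, hp, hkp⟩ := this
      exact ⟨p, Nat.prime_of_mem_primeFactors hp,
        dvd_trans (pow_dvd_pow p hkp) (Nat.ordProj_dvd m p)⟩
    have hcard2 : expA m - 1 ≤ ((Icc 2 x).filter (fun k => ∃ p, p.Prime ∧ p ^ k ∣ m)).card := by
      calc expA m - 1 = (Icc 2 (expA m)).card := by rw [Nat.card_Icc]; omega
        _ ≤ _ := Finset.card_le_card hsub
    have hfin : (expA m : ℝ)
        ≤ 1 + (((Icc 2 x).filter (fun k => ∃ p, p.Prime ∧ p ^ k ∣ m)).card : ℝ) := by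
      have : expA m ≤ 1 + ((Icc 2 x).filter (fun k => ∃ p, p.Prime ∧ p ^ k ∣ m)).card := by omega
      exact_mod_cast this
    linarith

set_option maxHeartbeats 1000000 in
open scoped Classical in
theorem stmt_8 : ∃ C : ℝ, 0 < C ∧ ∀ x : ℕ, 1 ≤ x →
    (x : ℝ) ≤ (∑ m ∈ Finset.Icc 1 x,
        if rad m = 1 then (1 : ℝ) else Real.log m / Real.log (rad m)) ∧
      (∑ m ∈ Finset.Icc 1 x,
        if rad m = 1 then (1 : ℝ) else Real.log m / Real.log (rad m)) ≤ C * x := by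
  refine ⟨3, by norm_num, fun x hx => ⟨?_, ?_⟩⟩
  · -- lower bound
    have : ∀ m ∈ Icc 1 x, (1:ℝ) ≤
        (if rad m = 1 then (1 : ℝ) else Real.log m / Real.log (rad m)) := by
      intro m hm
      rw [mem_Icc] at hm
      rcases Nat.lt_or_ge m 2 with h | h
      · have : m = 1 := by omega
        subst this; simp [rad]
      · have hrad2 : 2 ≤ rad m := two_le_rad8 h
        rw [if_neg (by omega : rad m ≠ 1)]
        have hlogpos : 0 < Real.log (rad m) := by
          apply Real.log_pos; exact_mod_cast hrad2
        rw [le_div_iff₀ hlogpos, one_mul]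
        apply Real.log_le_log (by positivity)
        exact_mod_cast Nat.le_of_dvd (by omega) (Nat.prod_primeFactors_dvd m)
    calc (x:ℝ) = ∑ _m ∈ Icc 1 x, (1:ℝ) := by
          rw [Finset.sum_const, Nat.card_Icc]
          simp
      _ ≤ _ := Finset.sum_le_sum this
  · -- upper bound
    have step1 : (∑ m ∈ Icc 1 x,
        if rad m = 1 then (1 : ℝ) else Real.log m / Real.log (rad m))
        ≤ ∑ m ∈ Icc 1 x,
          (1 + (((Icc 2 x).filter (fun k => ∃ p, p.Prime ∧ p ^ k ∣ m)).card : ℝ)) := by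
      apply Finset.sum_le_sum
      intro m hm
      rw [mem_Icc] at hm
      exact term_le8 x m hm.1 hm.2
    have swap : ∑ m ∈ Icc 1 x,
          (((Icc 2 x).filter (fun k => ∃ p, p.Prime ∧ p ^ k ∣ m)).card : ℝ)
        = ∑ k ∈ Icc 2 x,
          (((Icc 1 x).filter (fun m => ∃ p, p.Prime ∧ p ^ k ∣ m)).card : ℝ) := by
      have : ∑ m ∈ Icc 1 x, ((Icc 2 x).filter (fun k => ∃ p, p.Prime ∧ p ^ k ∣ m)).card
          = ∑ k ∈ Icc 2 x, ((Icc 1 x).filter (fun m => ∃ p, p.Prime ∧ p ^ k ∣ m)).card := by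
        simp only [Finset.card_filter]
        exact Finset.sum_comm
      exact_mod_cast this
    have step2 : ∑ k ∈ Icc 2 x,
          (((Icc 1 x).filter (fun m => ∃ p, p.Prime ∧ p ^ k ∣ m)).card : ℝ) ≤ 2 * x := by
      calc ∑ k ∈ Icc 2 x,
            (((Icc 1 x).filter (fun m => ∃ p, p.Prime ∧ p ^ k ∣ m)).card : ℝ)
          ≤ ∑ k ∈ Icc 2 x, (4 * x * (1/2:ℝ)^k) := by
            apply Finset.sum_le_sum
            intro k hk
            have hk2 : 2 ≤ k := (mem_Icc.1 hk).1
            exact le_trans (card_k_bound8 x k hk2) (sum_div_pow_le8 x k hk2)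
        _ = 4 * x * ∑ k ∈ Icc 2 x, (1/2:ℝ)^k := by rw [Finset.mul_sum]
        _ ≤ 4 * x * (1/2) := by
            apply mul_le_mul_of_nonneg_left (geom8 x) (by positivity)
        _ = 2 * x := by ring
    have hsum1 : ∑ _m ∈ Icc 1 x, (1:ℝ) = x := by
      rw [Finset.sum_const, Nat.card_Icc]
      simp
    have split : ∑ m ∈ Icc 1 x,
          (1 + (((Icc 2 x).filter (fun k => ∃ p, p.Prime ∧ p ^ k ∣ m)).card : ℝ))
        = (∑ _m ∈ Icc 1 x, (1:ℝ)) + ∑ m ∈ Icc 1 x,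
          (((Icc 2 x).filter (fun k => ∃ p, p.Prime ∧ p ^ k ∣ m)).card : ℝ) :=
      Finset.sum_add_distrib
    linarith [step1, split, step2, hsum1, swap.ge, swap.le]
end

section
/- The Dirichlet series of f(m) = m / rad(m) satisfies, for real s > 2, ∑_{n ≥ 1} f(n)/n^s = ∏_p (1 + 1/(p^s − p)), where the product is over all primes p. -/
lemma rad_dvd (n : ℕ) : rad n ∣ n := Nat.prod_primeFactors_dvd n

lemma rad_one : rad 1 = 1 := by simp [rad]

lemma rad_mul_coprime {m n : ℕ} (h : Nat.Coprime m n) :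
    rad (m * n) = rad m * rad n := by
  unfold rad
  rw [h.primeFactors_mul, Finset.prod_union h.disjoint_primeFactors]

lemma rad_prime_pow {p : ℕ} (hp : p.Prime) {k : ℕ} (hk : k ≠ 0) :
    rad (p ^ k) = p := by
  simp [rad, Nat.primeFactors_prime_pow hk hp]

theorem stmt_10 (s : ℝ) (hs : 2 < s) :
    ∑' n : ℕ, ((n / rad n : ℕ) : ℝ) / (n : ℝ) ^ s =
      ∏' p : Nat.Primes, (1 + 1 / ((p : ℝ) ^ s - (p : ℝ))) := by
  set f : ℕ → ℝ := fun n => ((n / rad n : ℕ) : ℝ) / (n : ℝ) ^ s with hf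
  have hs1 : (1 : ℝ) < s := by linarith
  have hf₀ : f 0 = 0 := by simp [hf]
  have hf₁ : f 1 = 1 := by simp [hf, rad_one]
  have hfnonneg : ∀ n, 0 ≤ f n := fun n =>
    div_nonneg (Nat.cast_nonneg _) (Real.rpow_nonneg (Nat.cast_nonneg _) _)
  have hfle : ∀ n : ℕ, f n ≤ (n : ℝ) ^ (1 - s) := by
    intro n
    rcases Nat.eq_zero_or_pos n with rfl | hn
    · simp [hf₀]; positivity
    have hnpos : (0 : ℝ) < n := by exact_mod_cast hn
    have h1 : ((n / rad n : ℕ) : ℝ) ≤ (n : ℝ) := by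
      exact_mod_cast Nat.div_le_self n (rad n)
    calc f n ≤ (n : ℝ) / (n : ℝ) ^ s := by
          exact div_le_div_of_nonneg_right h1 (Real.rpow_pos_of_pos hnpos s).le
      _ = (n : ℝ) ^ (1 - s) := by
          rw [Real.rpow_sub hnpos, Real.rpow_one]
  have hsum : Summable fun n => ‖f n‖ := by
    have hbig : Summable fun n : ℕ => (n : ℝ) ^ (1 - s) := by
      rw [Real.summable_nat_rpow]; linarith
    refine Summable.of_nonneg_of_le (fun n => norm_nonneg _) (fun n => ?_) hbig
    rw [Real.norm_of_nonneg (hfnonneg n)]; exact hfle n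
  have hmul : ∀ {m n : ℕ}, Nat.Coprime m n → f (m * n) = f m * f n := by
    intro m n h
    rcases Nat.eq_zero_or_pos m with rfl | hm
    · simp [hf₀]
    rcases Nat.eq_zero_or_pos n with rfl | hn
    · simp [hf₀]
    have hdivmul : (m * n) / rad (m * n) = (m / rad m) * (n / rad n) := by
      rw [rad_mul_coprime h, Nat.div_mul_div_comm (rad_dvd m) (rad_dvd n)]
    simp only [hf, hdivmul, Nat.cast_mul]
    rw [Real.mul_rpow (Nat.cast_nonneg m) (Nat.cast_nonneg n)]
    ring
  have key := EulerProduct.eulerProduct_tprod hf₁ hmul hsum hf₀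
  rw [← key]
  refine tprod_congr fun p => ?_
  -- compute the local factor
  obtain ⟨p, hp⟩ := p
  have hp2 : (2 : ℝ) ≤ (p : ℝ) := by exact_mod_cast hp.two_le
  have hppos : (0 : ℝ) < (p : ℝ) := by linarith
  have hp1 : (1 : ℝ) < (p : ℝ) := by linarith
  have hx1 : (p : ℝ) ^ ((1 : ℝ) - s) < 1 :=
    Real.rpow_lt_one_of_one_lt_of_neg hp1 (by linarith)
  have hx0 : (0 : ℝ) ≤ (p : ℝ) ^ ((1 : ℝ) - s) := Real.rpow_nonneg hppos.le _
  have hterm : ∀ e : ℕ, f (p ^ (e + 1)) =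
      ((p : ℝ) ^ ((1 : ℝ) - s)) ^ e * ((p : ℝ) ^ s)⁻¹ := by
    intro e
    have hnum : (p ^ (e + 1)) / rad (p ^ (e + 1)) = p ^ e := by
      rw [rad_prime_pow hp (Nat.succ_ne_zero e), pow_succ,
        Nat.mul_div_cancel _ hp.pos]
    simp only [hf, hnum]
    rw [Nat.cast_pow, Nat.cast_pow, ← Real.rpow_natCast (p : ℝ) (e + 1),
      ← Real.rpow_mul hppos.le, ← Real.rpow_natCast (p : ℝ) e,
      ← Real.rpow_natCast ((p : ℝ) ^ ((1 : ℝ) - s)) e, ← Real.rpow_mul hppos.le,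
      div_eq_mul_inv, ← Real.rpow_neg hppos.le,
      ← Real.rpow_add hppos, ← Real.rpow_neg hppos.le, ← Real.rpow_add hppos]
    congr 1
    push_cast
    ring
  have hsumloc : Summable fun e : ℕ => f (p ^ e) := by
    refine (hsum.of_norm).comp_injective ?_
    exact fun a b hab => Nat.pow_right_injective hp.two_le hab
  rw [Summable.tsum_eq_zero_add hsumloc]
  have h0 : f (p ^ 0) = 1 := by simpa using hf₁
  rw [h0]
  congr 1
  simp only [hterm]
  rw [tsum_mul_right, tsum_geometric_of_lt_one hx0 hx1]
  have hps : (0 : ℝ) < (p : ℝ) ^ s := Real.rpow_pos_of_pos hppos s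
  have hkey : (p : ℝ) ^ s * (1 - (p : ℝ) ^ ((1 : ℝ) - s)) = (p : ℝ) ^ s - (p : ℝ) := by
    rw [mul_sub, mul_one, ← Real.rpow_add hppos]
    norm_num
  rw [one_div, inv_mul_eq_div, div_eq_inv_mul, ← mul_inv, mul_comm, hkey]
end

section
/- For no constant A > 0 does the estimate ∑_{m ≤ x} m / rad(m) = O(x (log x)^A) hold; i.e., for every A > 0, limsup_{x → ∞} (∑_{m ≤ x} m/rad(m)) / (x (log x)^A) = ∞. -/
open Finset

namespace Stmt11

lemma primeFactors_prod' {ι : Type*} [DecidableEq ι] (s : Finset ι) (f : ι → ℕ)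
    (hf : ∀ i ∈ s, f i ≠ 0) :
    (∏ i ∈ s, f i).primeFactors = s.biUnion fun i => (f i).primeFactors := by
  induction s using Finset.cons_induction with
  | empty => simp
  | cons i s hi ih =>
    rw [prod_cons, Nat.primeFactors_mul (hf i (mem_cons_self _ _))
      (prod_ne_zero_iff.2 fun j hj => hf j (mem_cons_of_mem hj)),
      ih fun j hj => hf j (mem_cons_of_mem hj), cons_eq_insert, biUnion_insert]

variable {Q : Finset ℕ} {n : ℕ}

def Rf (Q : Finset ℕ) : ℕ := ∏ q ∈ Q, q

def Tf (Q : Finset ℕ) (e : ↥Q → ℕ) : ℕ := ∏ q : ↥Q, (q : ℕ) ^ (e q + 1)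

def mf (Q : Finset ℕ) (n : ℕ) (e : ↥Q → ℕ) : ℕ :=
  2 ^ (Nat.log 2 (Rf Q ^ (n + 1) / Tf Q e) + 1) * Tf Q e

lemma Rf_pos (hP : ∀ q ∈ Q, Nat.Prime q) : 0 < Rf Q :=
  Finset.prod_pos fun q hq => (hP q hq).pos

lemma Tf_pos (hP : ∀ q ∈ Q, Nat.Prime q) (e : ↥Q → ℕ) : 0 < Tf Q e :=
  Finset.prod_pos fun q _ => pow_pos (hP q q.2).pos _

lemma R_dvd_Tf (e : ↥Q → ℕ) : Rf Q ∣ Tf Q e := by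
  unfold Rf Tf
  rw [← Finset.prod_attach Q (fun q => q), Finset.univ_eq_attach]
  exact Finset.prod_dvd_prod_of_dvd _ _ fun q _ => dvd_pow_self _ (Nat.succ_ne_zero _)

lemma Tf_dvd (e : ↥Q → ℕ) (he : ∀ q, e q ≤ n) : Tf Q e ∣ Rf Q ^ (n + 1) := by
  unfold Rf Tf
  rw [← Finset.prod_pow, ← Finset.prod_attach Q (fun q => q ^ (n + 1)), Finset.univ_eq_attach]
  exact Finset.prod_dvd_prod_of_dvd _ _ fun q _ => pow_dvd_pow _ (Nat.succ_le_succ (he q))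

lemma mf_pos (hP : ∀ q ∈ Q, Nat.Prime q) (e : ↥Q → ℕ) : 0 < mf Q n e :=
  Nat.mul_pos (pow_pos two_pos _) (Tf_pos hP e)

lemma mf_le (hP : ∀ q ∈ Q, Nat.Prime q) (e : ↥Q → ℕ) (he : ∀ q, e q ≤ n) :
    mf Q n e ≤ 2 * Rf Q ^ (n + 1) := by
  have hT := Tf_pos hP e
  have hR := Rf_pos hP
  have hD : 0 < Rf Q ^ (n + 1) / Tf Q e :=
    Nat.div_pos (Nat.le_of_dvd (pow_pos hR _) (Tf_dvd e he)) hT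
  calc mf Q n e = 2 * (2 ^ Nat.log 2 (Rf Q ^ (n + 1) / Tf Q e) * Tf Q e) := by
        unfold mf; ring
    _ ≤ 2 * ((Rf Q ^ (n + 1) / Tf Q e) * Tf Q e) := by
        gcongr
        exact Nat.pow_log_le_self 2 hD.ne'
    _ = 2 * Rf Q ^ (n + 1) := by rw [Nat.div_mul_cancel (Tf_dvd e he)]

lemma primeFactors_Tf (hP : ∀ q ∈ Q, Nat.Prime q) (e : ↥Q → ℕ) :
    (Tf Q e).primeFactors = Q := by
  unfold Tf
  rw [Finset.univ_eq_attach, primeFactors_prod' _ _ (fun q _ => by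
    exact (pow_pos (hP q q.2).pos _).ne')]
  ext p
  simp only [Finset.mem_biUnion, Finset.mem_attach, true_and]
  constructor
  · rintro ⟨q, hq⟩
    rw [Nat.primeFactors_pow _ (Nat.succ_ne_zero _),
      Nat.Prime.primeFactors (hP q q.2), Finset.mem_singleton] at hq
    exact hq ▸ q.2
  · intro hp
    refine ⟨⟨p, hp⟩, ?_⟩
    rw [Nat.primeFactors_pow _ (Nat.succ_ne_zero _),
      Nat.Prime.primeFactors (hP p hp), Finset.mem_singleton]

lemma primeFactors_mf (hP : ∀ q ∈ Q, Nat.Prime q) (e : ↥Q → ℕ) :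
    (mf Q n e).primeFactors = insert 2 Q := by
  unfold mf
  rw [Nat.primeFactors_mul (by positivity) (Tf_pos hP e).ne',
    Nat.primeFactors_pow _ (Nat.succ_ne_zero _), Nat.Prime.primeFactors Nat.prime_two,
    primeFactors_Tf hP e, ← Finset.insert_eq]

lemma rad_mf (hP : ∀ q ∈ Q, Nat.Prime q) (h2 : ∀ q ∈ Q, q ≠ 2) (e : ↥Q → ℕ) :
    rad (mf Q n e) = 2 * Rf Q := by
  rw [rad, primeFactors_mf hP, Finset.prod_insert (fun h => h2 2 h rfl)]; rfl

lemma mf_div_rad (hP : ∀ q ∈ Q, Nat.Prime q) (h2 : ∀ q ∈ Q, q ≠ 2) (e : ↥Q → ℕ) :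
    mf Q n e / rad (mf Q n e) =
      2 ^ Nat.log 2 (Rf Q ^ (n + 1) / Tf Q e) * (Tf Q e / Rf Q) := by
  rw [rad_mf hP h2]
  have hR := Rf_pos hP
  have h1 : mf Q n e = (2 * Rf Q) *
      (2 ^ Nat.log 2 (Rf Q ^ (n + 1) / Tf Q e) * (Tf Q e / Rf Q)) := by
    unfold mf
    calc 2 ^ (Nat.log 2 (Rf Q ^ (n + 1) / Tf Q e) + 1) * Tf Q e
        = 2 ^ (Nat.log 2 (Rf Q ^ (n + 1) / Tf Q e) + 1) * ((Tf Q e / Rf Q) * Rf Q) := by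
          rw [Nat.div_mul_cancel (R_dvd_Tf e)]
      _ = (2 * Rf Q) * (2 ^ Nat.log 2 (Rf Q ^ (n + 1) / Tf Q e) * (Tf Q e / Rf Q)) := by
          rw [pow_succ]; ring
  rw [h1, Nat.mul_div_cancel_left _ (Nat.mul_pos two_pos hR)]

lemma mf_div_rad_lb (hP : ∀ q ∈ Q, Nat.Prime q) (h2 : ∀ q ∈ Q, q ≠ 2) (e : ↥Q → ℕ)
    (he : ∀ q, e q ≤ n) :
    Rf Q ^ n < 2 * (mf Q n e / rad (mf Q n e)) := by
  have hT := Tf_pos hP e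
  have hR := Rf_pos hP
  have hU : 0 < Tf Q e / Rf Q := Nat.div_pos (Nat.le_of_dvd hT (R_dvd_Tf e)) hR
  have hDU : (Rf Q ^ (n + 1) / Tf Q e) * (Tf Q e / Rf Q) = Rf Q ^ n := by
    refine Nat.eq_of_mul_eq_mul_right hR ?_
    rw [mul_assoc, Nat.div_mul_cancel (R_dvd_Tf e), Nat.div_mul_cancel (Tf_dvd e he),
      ← pow_succ]
  have hlog : Rf Q ^ (n + 1) / Tf Q e < 2 ^ (Nat.log 2 (Rf Q ^ (n + 1) / Tf Q e) + 1) :=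
    Nat.lt_pow_succ_log_self one_lt_two _
  rw [mf_div_rad hP h2, ← hDU]
  calc (Rf Q ^ (n + 1) / Tf Q e) * (Tf Q e / Rf Q)
      < 2 ^ (Nat.log 2 (Rf Q ^ (n + 1) / Tf Q e) + 1) * (Tf Q e / Rf Q) :=
        Nat.mul_lt_mul_of_lt_of_le hlog le_rfl hU
    _ = 2 * (2 ^ Nat.log 2 (Rf Q ^ (n + 1) / Tf Q e) * (Tf Q e / Rf Q)) := by
        rw [pow_succ]; ring

lemma factorization_Tf (hP : ∀ q ∈ Q, Nat.Prime q) (e : ↥Q → ℕ) (q : ↥Q) :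
    (Tf Q e).factorization (q : ℕ) = e q + 1 := by
  unfold Tf
  rw [Nat.factorization_prod (S := (Finset.univ : Finset ↥Q)) (g := fun q' : ↥Q => (q' : ℕ) ^ (e q' + 1))
    (fun q' _ => (pow_pos (hP q' q'.2).pos _).ne'), Finsupp.finset_sum_apply]
  have key : ∀ q' : ↥Q, ((q' : ℕ) ^ (e q' + 1)).factorization (q : ℕ)
      = if q' = q then e q + 1 else 0 := by
    intro q'
    rw [Nat.Prime.factorization_pow (hP q' q'.2), Finsupp.single_apply]
    by_cases h : q' = q
    · simp [h]
    · rw [if_neg h, if_neg (fun hc => h (Subtype.ext hc))]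
  rw [Finset.sum_congr rfl fun q' _ => key q']
  simp

lemma factorization_mf (hP : ∀ q ∈ Q, Nat.Prime q) (h2 : ∀ q ∈ Q, q ≠ 2) (e : ↥Q → ℕ)
    (q : ↥Q) : (mf Q n e).factorization (q : ℕ) = e q + 1 := by
  have hq2 : (q : ℕ) ≠ 2 := h2 q q.2
  unfold mf
  rw [Nat.factorization_mul (by positivity) (Tf_pos hP e).ne',
    Nat.Prime.factorization_pow Nat.prime_two]
  simp only [Finsupp.coe_add, Pi.add_apply, Finsupp.single_apply]
  rw [if_neg (fun h => hq2 h.symm), factorization_Tf hP e q, zero_add]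

lemma mf_inj (hP : ∀ q ∈ Q, Nat.Prime q) (h2 : ∀ q ∈ Q, q ≠ 2) (e e' : ↥Q → ℕ)
    (h : mf Q n e = mf Q n e') : e = e' := by
  funext q
  have h1 := factorization_mf (n := n) hP h2 e q
  have h2' := factorization_mf (n := n) hP h2 e' q
  rw [h, h2'] at h1
  omega

end Stmt11

theorem stmt_11 (A : ℝ) (hA : 0 < A) (C : ℝ) :
    ∃ x : ℕ, 2 ≤ x ∧
      C * ((x : ℝ) * Real.log x ^ A) < ∑ m ∈ Finset.Icc 1 x, ((m / rad m : ℕ) : ℝ) := by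
  classical
  set K : ℕ := ⌈A⌉₊ + 1 with hKdef
  have hinf : {p : ℕ | p.Prime ∧ p ≠ 2}.Infinite := by
    have h1 : {p : ℕ | p.Prime}.Infinite := Nat.infinite_setOf_prime
    have h2 : ({p : ℕ | p.Prime} \ {2}).Infinite := h1.diff (Set.finite_singleton 2)
    refine h2.mono ?_
    intro p hp
    exact ⟨hp.1, hp.2⟩
  obtain ⟨Q, hQsub, hQcard⟩ := hinf.exists_subset_card_eq K
  have hP : ∀ q ∈ Q, Nat.Prime q := fun q hq => (hQsub hq).1
  have h2 : ∀ q ∈ Q, q ≠ 2 := fun q hq => (hQsub hq).2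
  have hR : 0 < Stmt11.Rf Q := Stmt11.Rf_pos hP
  set R : ℕ := Stmt11.Rf Q with hRdef
  have hR1 : (1 : ℝ) ≤ (R : ℝ) := by exact_mod_cast hR
  set L : ℝ := Real.log (2 * R) with hLdef
  have hL : 0 < L := Real.log_pos (by push_cast; nlinarith)
  set C' : ℝ := max C 1 with hC'def
  have hC' : 0 < C' := lt_of_lt_of_le one_pos (le_max_right _ _)
  set n : ℕ := ⌈4 * C' * (R : ℝ) * L ^ A⌉₊ with hndef
  have hn1 : 4 * C' * (R : ℝ) * L ^ A < (n : ℝ) + 1 :=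
    lt_of_le_of_lt (Nat.le_ceil _) (by exact lt_add_one _)
  set x : ℕ := 2 * R ^ (n + 1) with hxdef
  have hx2 : 2 ≤ x := by
    have := Nat.one_le_iff_ne_zero.2 (pow_pos hR (n + 1)).ne'
    omega
  refine ⟨x, hx2, ?_⟩
  -- the family of constructed integers
  set φ : (↥Q → Fin (n + 1)) → ℕ := fun e => Stmt11.mf Q n (fun q => (e q : ℕ)) with hφdef
  have hinj : Function.Injective φ := by
    intro e e' h
    have := Stmt11.mf_inj (n := n) hP h2 _ _ h
    funext q
    exact Fin.ext (congrFun this q)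
  have hmem : ∀ e, φ e ∈ Finset.Icc 1 x := by
    intro e
    rw [Finset.mem_Icc]
    exact ⟨Stmt11.mf_pos hP _, Stmt11.mf_le hP _ fun q => Fin.is_le _⟩
  have hterm : ∀ e, ((R : ℝ) ^ n + 1) / 2 ≤ ((φ e / rad (φ e) : ℕ) : ℝ) := by
    intro e
    have h := Stmt11.mf_div_rad_lb hP h2 (fun q => (e q : ℕ)) (fun q => Fin.is_le _)
    have h' : R ^ n + 1 ≤ 2 * (φ e / rad (φ e)) := h
    have := (Nat.cast_le (α := ℝ)).2 h'
    push_cast at this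
    linarith
  -- lower bound the sum
  have hsub : Finset.univ.image φ ⊆ Finset.Icc 1 x := by
    intro m hm
    obtain ⟨e, _, rfl⟩ := Finset.mem_image.1 hm
    exact hmem e
  have hS1 : ∑ m ∈ Finset.univ.image φ, ((m / rad m : ℕ) : ℝ)
      ≤ ∑ m ∈ Finset.Icc 1 x, ((m / rad m : ℕ) : ℝ) :=
    Finset.sum_le_sum_of_subset_of_nonneg hsub (fun i _ _ => by positivity)
  have hS2 : ∑ m ∈ Finset.univ.image φ, ((m / rad m : ℕ) : ℝ)
      = ∑ e : (↥Q → Fin (n + 1)), ((φ e / rad (φ e) : ℕ) : ℝ) :=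
    Finset.sum_image fun e _ e' _ h => hinj h
  have hcard : (Finset.univ : Finset (↥Q → Fin (n + 1))).card = (n + 1) ^ K := by
    rw [Finset.card_univ, Fintype.card_fun]
    simp [hQcard]
  have hS3 : ((n : ℝ) + 1) ^ K * (((R : ℝ) ^ n + 1) / 2)
      ≤ ∑ e : (↥Q → Fin (n + 1)), ((φ e / rad (φ e) : ℕ) : ℝ) := by
    calc ((n : ℝ) + 1) ^ K * (((R : ℝ) ^ n + 1) / 2)
        = ∑ _e : (↥Q → Fin (n + 1)), (((R : ℝ) ^ n + 1) / 2) := by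
          rw [Finset.sum_const, hcard, nsmul_eq_mul]
          push_cast
          ring
      _ ≤ _ := Finset.sum_le_sum fun e _ => hterm e
  have hSlb : ((n : ℝ) + 1) ^ K * (((R : ℝ) ^ n + 1) / 2)
      ≤ ∑ m ∈ Finset.Icc 1 x, ((m / rad m : ℕ) : ℝ) := le_trans hS3 (hS2 ▸ hS1)
  -- now the analytic estimate
  have hn1' : (0 : ℝ) < (n : ℝ) + 1 := by positivity
  have hlogx_pos : 0 < Real.log x := Real.log_pos (by exact_mod_cast (by omega : (1:ℕ) < x))
  have hlogx : Real.log x ≤ ((n : ℝ) + 1) * L := by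
    have hxcast : (x : ℝ) = 2 * (R : ℝ) ^ (n + 1) := by push_cast [hxdef]; ring
    rw [hxcast, Real.log_mul two_ne_zero (by positivity), Real.log_pow]
    rw [hLdef, Real.log_mul two_ne_zero (by positivity)]
    have hlog2 : 0 ≤ Real.log 2 := Real.log_nonneg one_le_two
    have hlogR : 0 ≤ Real.log R := Real.log_nonneg hR1
    push_cast
    nlinarith
  have hpow : Real.log x ^ A ≤ (((n : ℝ) + 1) * L) ^ A :=
    Real.rpow_le_rpow hlogx_pos.le hlogx hA.le
  have hxpos : (0 : ℝ) < (x : ℝ) := by positivity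
  have key : C' * ((x : ℝ) * (((n : ℝ) + 1) * L) ^ A)
      < ((n : ℝ) + 1) ^ K * (((R : ℝ) ^ n + 1) / 2) := by
    have hxcast : (x : ℝ) = 2 * (R : ℝ) ^ (n + 1) := by push_cast [hxdef]; ring
    have hmulrpow : (((n : ℝ) + 1) * L) ^ A = ((n : ℝ) + 1) ^ A * L ^ A :=
      Real.mul_rpow hn1'.le hL.le
    have hRpow : (R : ℝ) ^ (n + 1) = (R : ℝ) ^ n * R := by ring
    have step1 : C' * ((x : ℝ) * (((n : ℝ) + 1) * L) ^ A)
        = (4 * C' * (R : ℝ) * L ^ A) * (((n : ℝ) + 1) ^ A * ((R : ℝ) ^ n / 2)) := by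
      rw [hxcast, hmulrpow, hRpow]; ring
    have step2 : (4 * C' * (R : ℝ) * L ^ A) * (((n : ℝ) + 1) ^ A * ((R : ℝ) ^ n / 2))
        < (((n : ℝ) + 1)) * (((n : ℝ) + 1) ^ A * ((R : ℝ) ^ n / 2)) := by
      have hpos : (0 : ℝ) < ((n : ℝ) + 1) ^ A * ((R : ℝ) ^ n / 2) := by
        have := Real.rpow_pos_of_pos hn1' A
        positivity
      exact mul_lt_mul_of_pos_right hn1 hpos
    have step3 : (((n : ℝ) + 1)) * (((n : ℝ) + 1) ^ A * ((R : ℝ) ^ n / 2))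
        ≤ ((n : ℝ) + 1) ^ K * (((R : ℝ) ^ n + 1) / 2) := by
      have hA1K : A + 1 ≤ (K : ℝ) := by
        have := Nat.le_ceil A
        push_cast [hKdef]
        linarith
      have h1 : ((n : ℝ) + 1) * ((n : ℝ) + 1) ^ A = ((n : ℝ) + 1) ^ (A + 1) := by
        rw [Real.rpow_add hn1', Real.rpow_one]; ring
      have h2' : ((n : ℝ) + 1) ^ (A + 1) ≤ ((n : ℝ) + 1) ^ ((K : ℕ) : ℝ) :=
        Real.rpow_le_rpow_of_exponent_le (by push_cast; linarith [Nat.cast_nonneg (α := ℝ) n]) hA1K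
      have h3 : ((n : ℝ) + 1) ^ ((K : ℕ) : ℝ) = ((n : ℝ) + 1) ^ K :=
        Real.rpow_natCast _ _
      have h4 : ((n : ℝ) + 1) * ((n : ℝ) + 1) ^ A ≤ ((n : ℝ) + 1) ^ K := by
        rw [h1, ← h3]; exact h2'
      have h5 : (0 : ℝ) ≤ (R : ℝ) ^ n / 2 := by positivity
      calc (((n : ℝ) + 1)) * (((n : ℝ) + 1) ^ A * ((R : ℝ) ^ n / 2))
          = (((n : ℝ) + 1) * ((n : ℝ) + 1) ^ A) * ((R : ℝ) ^ n / 2) := by ring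
        _ ≤ ((n : ℝ) + 1) ^ K * ((R : ℝ) ^ n / 2) := mul_le_mul_of_nonneg_right h4 h5
        _ ≤ ((n : ℝ) + 1) ^ K * (((R : ℝ) ^ n + 1) / 2) := by
            have : (0 : ℝ) ≤ ((n : ℝ) + 1) ^ K := by positivity
            nlinarith
    linarith [step1.le, step2, step3]
  have hfinal : C * ((x : ℝ) * Real.log x ^ A)
      < ((n : ℝ) + 1) ^ K * (((R : ℝ) ^ n + 1) / 2) := by
    have hb1 : C * ((x : ℝ) * Real.log x ^ A) ≤ C' * ((x : ℝ) * Real.log x ^ A) := by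
      have hnn : (0 : ℝ) ≤ (x : ℝ) * Real.log x ^ A := by
        have := Real.rpow_nonneg hlogx_pos.le A
        positivity
      exact mul_le_mul_of_nonneg_right (le_max_left _ _) hnn
    have hb2 : C' * ((x : ℝ) * Real.log x ^ A) ≤ C' * ((x : ℝ) * (((n : ℝ) + 1) * L) ^ A) := by
      have := mul_le_mul_of_nonneg_left hpow hxpos.le
      exact mul_le_mul_of_nonneg_left (by linarith) hC'.le
    linarith
  linarith
end

section
/- Let m be a positive integer with canonical factorization ∏_{i=1}^k p_i^{e_i}, let a be coprime to m, and let n be any natural number. Set T = ∏ p_i (the radical of m), let e = max e_i, write n = M·φ(T) + r with 0 ≤ r < φ(T), and write a^{φ(T)} = 1 + T·s. Then a^n ≡ a^r · ∑_{i=0}^{e-1} C(M, i)·(T·s)^i (mod m). -/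
theorem stmt_13 (k : ℕ) (p e : Fin k → ℕ) (hp : ∀ i, (p i).Prime)
    (hinj : Function.Injective p) (he : ∀ i, 1 ≤ e i)
    (m T emax a n M r : ℕ) (s : ℤ)
    (hm : m = ∏ i, p i ^ e i) (hT : T = ∏ i, p i)
    (hemax : emax = Finset.univ.sup e)
    (ha : Nat.Coprime a m)
    (hn : n = M * Nat.totient T + r) (hr : r < Nat.totient T)
    (hs : (a : ℤ) ^ Nat.totient T = 1 + T * s) :
    (a : ZMod m) ^ n =
      (a : ZMod m) ^ r *
        ∑ i ∈ Finset.range emax, (Nat.choose M i : ZMod m) * ((((T : ℤ) * s : ℤ) : ZMod m)) ^ i := by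
  have hdvd : m ∣ T ^ emax := by
    subst hm hT hemax
    rw [← Finset.prod_pow]
    exact Finset.prod_dvd_prod_of_dvd _ _ fun i _ =>
      pow_dvd_pow _ (Finset.le_sup (Finset.mem_univ i))
  set x : ZMod m := (((T : ℤ) * s : ℤ) : ZMod m) with hxdef
  have hTm : (T : ZMod m) ^ emax = 0 := by
    have h := (ZMod.natCast_eq_zero_iff (T ^ emax) m).2 hdvd
    simpa [Nat.cast_pow] using h
  have hx : x ^ emax = 0 := by
    have hx' : x = (T : ZMod m) * (s : ZMod m) := by rw [hxdef]; push_cast; ring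
    rw [hx', mul_pow, hTm, zero_mul]
  have hxi : ∀ i, emax ≤ i → x ^ i = 0 := by
    intro i hi
    rw [← Nat.add_sub_cancel' hi, pow_add, hx, zero_mul]
  have haφ : (a : ZMod m) ^ Nat.totient T = 1 + x := by
    have h := congrArg (fun z : ℤ => (z : ZMod m)) hs
    push_cast at h
    rw [hxdef]; push_cast; exact h
  set N := max (M + 1) emax with hN
  have h1 : ∑ i ∈ Finset.range emax, (Nat.choose M i : ZMod m) * x ^ i
      = ∑ i ∈ Finset.range N, (Nat.choose M i : ZMod m) * x ^ i := by
    refine Finset.sum_subset (Finset.range_subset_range.2 (le_max_right _ _)) ?_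
    intro i _ hi
    rw [hxi i (by simpa using hi), mul_zero]
  have h3 : (1 + x) ^ M = ∑ i ∈ Finset.range N, (Nat.choose M i : ZMod m) * x ^ i := by
    rw [add_comm, add_pow]
    simp only [one_pow, mul_one]
    rw [Finset.sum_subset (Finset.range_subset_range.2 (le_max_left _ _))
      (fun i _ hi => by
        rw [Nat.choose_eq_zero_of_lt (by simpa using hi)]
        simp)]
    exact Finset.sum_congr rfl fun i _ => mul_comm _ _
  calc (a : ZMod m) ^ n = (a : ZMod m) ^ r * ((a : ZMod m) ^ Nat.totient T) ^ M := by
        rw [hn, pow_add, pow_mul]; ring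
    _ = (a : ZMod m) ^ r * ∑ i ∈ Finset.range emax, (Nat.choose M i : ZMod m) * x ^ i := by
        rw [haφ, h3, h1]
end
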